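/- Let W be a regular reachability or safety objective over C and M a chromatic memory structure. If M suffices to play optimally for W in all finite one-player arenas of Player 1, then W is M-progress-consistent. -/

import Mathlib

set_option autoImplicit false

namespace RegularMemory

/-- Concatenation of a finite word with an infinite word. -/
def wcat {C : Type} (w : List C) (x : ℕ → C) : ℕ → C := fun n =>
  if h : n < w.length then w.get ⟨n, h⟩ else x (n - w.length)

/-- The infinite word `w^ω` (junk value if `w` is empty). -/
noncomputable def wpow {C : Type} [Nonempty C] : List C → ℕ → C
  | [] => fun _ => Classical.arbitrary C
  | (a :: l) => fun n => (a :: l).get ⟨n % (a :: l).length, Nat.mod_lt n (Nat.succ_pos _)⟩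

/-- Winning continuations `w⁻¹W` of the finite word `w` for the objective `W`. -/
def contAfter {C : Type} (W : Set (ℕ → C)) (w : List C) : Set (ℕ → C) :=
  {x | wcat w x ∈ W}

/-- Prefix preorder `w₁ ⪯_W w₂`. -/
def prefLe {C : Type} (W : Set (ℕ → C)) (w₁ w₂ : List C) : Prop :=
  contAfter W w₁ ⊆ contAfter W w₂

/-- Strict prefix relation `w₁ ≺_W w₂`. -/
def prefLt {C : Type} (W : Set (ℕ → C)) (w₁ w₂ : List C) : Prop :=
  prefLe W w₁ w₂ ∧ ¬ prefLe W w₂ w₁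

/-- Comparability for the prefix preorder. -/
def PrefComparable {C : Type} (W : Set (ℕ → C)) (w₁ w₂ : List C) : Prop :=
  prefLe W w₁ w₂ ∨ prefLe W w₂ w₁

/-- The general reachability objective derived from `A`: infinite words with a prefix in `A`. -/
def ReachObj {C : Type} (A : Set (List C)) : Set (ℕ → C) :=
  {x | ∃ n : ℕ, (List.ofFn fun i : Fin n => x i) ∈ A}

/-- The general safety objective derived from `A`. -/
def SafeObj {C : Type} (A : Set (List C)) : Set (ℕ → C) :=
  (ReachObj A)ᶜ

/-- The prefix preorder of `W` has finitely many equivalence classes. -/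
def FinClasses {C : Type} (W : Set (ℕ → C)) : Prop :=
  (Set.range fun w : List C => contAfter W w).Finite

/-- The prefix preorder of `W` is well-founded:
every nonempty chain contains a minimal element. -/
def PrefWellFounded {C : Type} (W : Set (ℕ → C)) : Prop :=
  ∀ S : Set (List C), S.Nonempty →
    (∀ w₁ ∈ S, ∀ w₂ ∈ S, PrefComparable W w₁ w₂) →
    ∃ w₀ ∈ S, ∀ w ∈ S, ¬ prefLt W w w₀

/-- Chromatic memory structure. -/
structure MemStruct (C : Type) where
  M : Type
  init : M
  upd : M → C → M

/-- Extension of the update function to finite words. -/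
def MemStruct.updStar {C : Type} (N : MemStruct C) (m : N.M) (w : List C) : N.M :=
  w.foldl N.upd m

/-- The trivial one-state memory structure. -/
def trivMem (C : Type) : MemStruct C :=
  ⟨Unit, (), fun _ _ => ()⟩

/-- `W` is `N`-strongly-monotone. -/
def StronglyMonotone {C : Type} (N : MemStruct C) (W : Set (ℕ → C)) : Prop :=
  ∀ w₁ w₂ : List C,
    N.updStar N.init w₁ = N.updStar N.init w₂ → PrefComparable W w₁ w₂

/-- `W` is `N`-progress-consistent. -/
def ProgressConsistent {C : Type} [Nonempty C] (N : MemStruct C) (W : Set (ℕ → C)) : Prop :=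
  ∀ (m : N.M) (w₁ w₂ : List C),
    N.updStar N.init w₁ = m → N.updStar m w₂ = m →
    prefLt W w₁ (w₁ ++ w₂) → wcat w₁ (wpow w₂) ∈ W

/-- Two-player arena with colored edges; Player-1 vertices have outgoing edges
(so that strategies of Player 1 exist). -/
structure Arena (C : Type) where
  V : Type
  P1 : V → Prop
  E : Set (V × C × V)
  succ : ∀ v : V, P1 v → ∃ e ∈ E, e.1 = v

namespace Arena

/-- Valid histories starting at a given vertex. -/
def HistFrom {C : Type} (A : Arena C) : A.V → List (A.V × C × A.V) → Prop
  | _, [] => True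
  | v, e :: l => e ∈ A.E ∧ e.1 = v ∧ HistFrom A e.2.2 l

/-- Endpoint of a history. -/
def endFrom {C : Type} (A : Arena C) : A.V → List (A.V × C × A.V) → A.V
  | v, [] => v
  | _, e :: l => endFrom A e.2.2 l

/-- Infinite plays from a vertex. -/
def PlayFrom {C : Type} (A : Arena C) (v : A.V) (π : ℕ → A.V × C × A.V) : Prop :=
  (π 0).1 = v ∧ ∀ n : ℕ, π n ∈ A.E ∧ (π n).2.2 = (π (n + 1)).1

/-- Colors along a play. -/
def playCol {C V : Type} (π : ℕ → V × C × V) : ℕ → C :=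
  fun n => (π n).2.1

/-- Strategies of Player 1: on every valid history ending in a Player-1 vertex,
the strategy picks an edge leaving that vertex. -/
structure Strategy {C : Type} (A : Arena C) where
  next : A.V → List (A.V × C × A.V) → A.V × C × A.V
  legal : ∀ (v : A.V) (l : List (A.V × C × A.V)),
    A.HistFrom v l → A.P1 (A.endFrom v l) →
      next v l ∈ A.E ∧ (next v l).1 = A.endFrom v l

/-- A play from `v` is consistent with the strategy `σ`. -/
def Strategy.Consistent {C : Type} {A : Arena C} (σ : A.Strategy) (v : A.V)
    (π : ℕ → A.V × C × A.V) : Prop :=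
  ∀ n : ℕ, A.P1 (A.endFrom v (List.ofFn fun i : Fin n => π i)) →
    π n = σ.next v (List.ofFn fun i : Fin n => π i)

/-- `σ` is winning from `v` for the objective `W`. -/
def Strategy.WinningFrom {C : Type} {A : Arena C} (σ : A.Strategy)
    (W : Set (ℕ → C)) (v : A.V) : Prop :=
  ∀ π : ℕ → A.V × C × A.V, A.PlayFrom v π → σ.Consistent v π → playCol π ∈ W

/-- `σ` is optimal in `(A, W)`: winning from every vertex from which
Player 1 has some winning strategy. -/
def Strategy.Optimal {C : Type} {A : Arena C} (σ : A.Strategy) (W : Set (ℕ → C)) : Prop :=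
  ∀ v : A.V, (∃ σ' : A.Strategy, σ'.WinningFrom W v) → σ.WinningFrom W v

/-- `σ` is based on the memory structure `N`. -/
def Strategy.BasedOn {C : Type} {A : Arena C} (σ : A.Strategy) (N : MemStruct C) : Prop :=
  ∃ nxt : A.V → N.M → A.V × C × A.V,
    ∀ (v : A.V) (l : List (A.V × C × A.V)),
      A.HistFrom v l → A.P1 (A.endFrom v l) →
        σ.next v l = nxt (A.endFrom v l) (N.updStar N.init (l.map fun e => e.2.1))

/-- Finite arena: finitely many vertices and edges. -/
def IsFinite {C : Type} (A : Arena C) : Prop := Finite A.V ∧ A.E.Finite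

/-- Finitely branching arena. -/
def FinBranching {C : Type} (A : Arena C) : Prop :=
  ∀ v : A.V, {e ∈ A.E | e.1 = v}.Finite

/-- One-player arena of Player 1. -/
def OneP1 {C : Type} (A : Arena C) : Prop := ∀ v : A.V, A.P1 v

end Arena

/-- `N` suffices to play optimally for `W` in all arenas of the class `P`. -/
def SufficesIn {C : Type} (N : MemStruct C) (W : Set (ℕ → C))
    (P : Arena C → Prop) : Prop :=
  ∀ A : Arena C, P A → ∃ σ : A.Strategy, σ.BasedOn N ∧ σ.Optimal W

/-- Deterministic automaton (with complete transition function). -/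
structure DetAuto (C : Type) where
  Q : Type
  init : Q
  δ : Q → C → Q
  F : Set Q

/-- Extension of the transition function to finite words. -/
def DetAuto.δStar {C : Type} (D : DetAuto C) (q : D.Q) (w : List C) : D.Q :=
  w.foldl D.δ q

/-- Language recognized by `D`. -/
def DetAuto.lang {C : Type} (D : DetAuto C) : Set (List C) :=
  {w | D.δStar D.init w ∈ D.F}

/-- Prefix preorder extended to automaton states. -/
def statePrefLe {C : Type} (D : DetAuto C) (W : Set (ℕ → C)) (q₁ q₂ : D.Q) : Prop :=
  ∀ w₁ w₂ : List C,
    D.δStar D.init w₁ = q₁ → D.δStar D.init w₂ = q₂ → prefLe W w₁ w₂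

def statePrefLt {C : Type} (D : DetAuto C) (W : Set (ℕ → C)) (q₁ q₂ : D.Q) : Prop :=
  statePrefLe D W q₁ q₂ ∧ ¬ statePrefLe D W q₂ q₁

def StateComparable {C : Type} (D : DetAuto C) (W : Set (ℕ → C)) (q₁ q₂ : D.Q) : Prop :=
  statePrefLe D W q₁ q₂ ∨ statePrefLe D W q₂ q₁

/-- Monotone decomposition of `D` with `k` sets. -/
def MonotoneDecomposition {C : Type} (D : DetAuto C) (W : Set (ℕ → C))
    {k : ℕ} (Γ : Fin k → Set D.Q) : Prop :=
  (∀ q : D.Q, ∃ i : Fin k, q ∈ Γ i) ∧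
  (∀ (c : C) (i : Fin k), ∃ j : Fin k, (fun q => D.δ q c) '' Γ i ⊆ Γ j) ∧
  (∀ i : Fin k, ∀ q₁ ∈ Γ i, ∀ q₂ ∈ Γ i, StateComparable D W q₁ q₂)

end RegularMemory


namespace RegularMemory

/-! ### Auxiliary lemmas on words -/

section Words

variable {C : Type}

lemma wcat_lt {w : List C} {x : ℕ → C} {n : ℕ} (h : n < w.length) :
    wcat w x n = w.get ⟨n, h⟩ := dif_pos h

lemma wcat_ge {w : List C} {x : ℕ → C} {n : ℕ} (h : w.length ≤ n) :
    wcat w x n = x (n - w.length) := dif_neg (by omega)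

lemma wcat_getD {w : List C} {x : ℕ → C} {n : ℕ} (h : n < w.length) (d : C) :
    wcat w x n = w.getD n d := by
  rw [wcat_lt h, List.getD_eq_getElem _ _ h]
  rfl

lemma wcat_append (w₁ w₂ : List C) (x : ℕ → C) :
    wcat (w₁ ++ w₂) x = wcat w₁ (wcat w₂ x) := by
  funext n
  rcases Nat.lt_or_ge n w₁.length with h | h
  · rw [wcat_lt (show n < (w₁ ++ w₂).length by simp; omega), wcat_lt h]
    simp only [List.get_eq_getElem]
    exact List.getElem_append_left h
  · rw [wcat_ge h]
    rcases Nat.lt_or_ge n (w₁.length + w₂.length) with h2 | h2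
    · rw [wcat_lt (show n < (w₁ ++ w₂).length by simp; omega),
        wcat_lt (show n - w₁.length < w₂.length by omega)]
      simp only [List.get_eq_getElem]
      exact List.getElem_append_right h
    · rw [wcat_ge (show (w₁ ++ w₂).length ≤ n by simp; omega),
        wcat_ge (show w₂.length ≤ n - w₁.length by omega)]
      congr 1
      simp
      omega

lemma wpow_getD {y : List C} [Nonempty C] (hy : y ≠ []) (n : ℕ) (d : C) :
    wpow y n = y.getD (n % y.length) d := by
  cases y with
  | nil => exact absurd rfl hy
  | cons a l =>
    have hlt : n % (a :: l).length < (a :: l).length := Nat.mod_lt n (by simp)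
    show (a :: l).get _ = _
    rw [List.getD_eq_getElem _ _ hlt]
    rfl

lemma wpow_shift {y : List C} [Nonempty C] (hy : y ≠ []) (n : ℕ) :
    wpow y (y.length + n) = wpow y n := by
  inhabit C
  rw [wpow_getD hy _ default, wpow_getD hy _ default, Nat.add_mod_left]

lemma mem_contAfter {W : Set (ℕ → C)} {w : List C} {x : ℕ → C} :
    x ∈ contAfter W w ↔ wcat w x ∈ W := Iff.rfl

lemma contAfter_append {W : Set (ℕ → C)} {w₁ w₂ : List C} {x : ℕ → C} :
    x ∈ contAfter W (w₁ ++ w₂) ↔ wcat w₂ x ∈ contAfter W w₁ := by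
  simp [contAfter, wcat_append]

lemma contAfter_compl (W : Set (ℕ → C)) (w : List C) :
    contAfter Wᶜ w = (contAfter W w)ᶜ := rfl

lemma ofFn_congr {x x' : ℕ → C} {p : ℕ} (h : ∀ i < p, x i = x' i) :
    (List.ofFn fun i : Fin p => x i) = (List.ofFn fun i : Fin p => x' i) :=
  congrArg List.ofFn (funext fun i => h i i.isLt)

lemma wcat_congr {w : List C} {x x' : ℕ → C} {t : ℕ} (h : ∀ i < t, x i = x' i)
    {j : ℕ} (hj : j < w.length + t) : wcat w x j = wcat w x' j := by
  rcases Nat.lt_or_ge j w.length with h1 | h1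
  · rw [wcat_lt h1, wcat_lt h1]
  · rw [wcat_ge h1, wcat_ge h1]
    exact h _ (by omega)

lemma ofFn_split (s : ℕ → C) (i k : ℕ) :
    (List.ofFn fun t : Fin (i + k) => s t) =
      (List.ofFn fun t : Fin i => s t) ++ (List.ofFn fun t : Fin k => s (i + t)) := by
  apply List.ext_getElem (by simp)
  intro t h1 h2
  simp only [List.getElem_ofFn]
  rcases Nat.lt_or_ge t i with h | h
  · rw [List.getElem_append_left (by simpa using h)]
    simp
  · rw [List.getElem_append_right (by simpa using h)]
    simp only [List.getElem_ofFn]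
    congr 1
    simp
    omega

lemma mem_SafeObj {A : Set (List C)} {x : ℕ → C} :
    x ∈ SafeObj A ↔ ∀ n : ℕ, (List.ofFn fun i : Fin n => x i) ∉ A := by
  simp [SafeObj, ReachObj]

end Words

/-! ### The pumping lemma for safety objectives -/

section Pump

variable {C : Type} [Nonempty C]

lemma wpow_rep_agree {y : List C} (hy : y ≠ []) (x₂ : ℕ → C) :
    ∀ k, ∀ i < k * y.length, wpow y i = (wcat y)^[k] x₂ i := by
  intro k
  induction k with
  | zero => intro i hi; omega
  | succ k ih =>
    intro i hi
    rw [Function.iterate_succ_apply']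
    rcases Nat.lt_or_ge i y.length with h | h
    · rw [wcat_lt h, wpow_getD hy i (y.get ⟨i, h⟩), Nat.mod_eq_of_lt h,
        List.getD_eq_getElem _ _ h]
      rfl
    · have hmul : (k + 1) * y.length = k * y.length + y.length := by ring
      have h1 : i - y.length < k * y.length := by omega
      rw [wcat_ge h, ← ih _ h1, ← wpow_shift hy (i - y.length)]
      congr 1
      omega

lemma safe_pump {A : Set (List C)} {q y : List C} {x₂ : ℕ → C} (hy : y ≠ [])
    (heq : contAfter (SafeObj A) q = contAfter (SafeObj A) (q ++ y))
    (hx : wcat (q ++ y) x₂ ∈ SafeObj A) :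
    wcat q (wpow y) ∈ SafeObj A := by
  have hrep : ∀ k, (wcat y)^[k] x₂ ∈ contAfter (SafeObj A) q := by
    intro k
    induction k with
    | zero =>
      have : x₂ ∈ contAfter (SafeObj A) (q ++ y) := hx
      rw [← heq] at this
      exact this
    | succ k ih =>
      rw [Function.iterate_succ_apply']
      rw [heq] at ih
      exact contAfter_append.mp ih
  rw [mem_SafeObj]
  intro p hp
  have hylen : 0 < y.length := List.length_pos_iff.mpr hy
  have hagree : ∀ i < p, wcat q (wpow y) i = wcat q ((wcat y)^[p] x₂) i := by
    intro i hi
    apply wcat_congr (t := p * y.length)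
    · exact fun i hi => wpow_rep_agree hy x₂ p i hi
    · have : p ≤ p * y.length := Nat.le_mul_of_pos_right p hylen
      omega
  rw [ofFn_congr hagree] at hp
  have := (mem_SafeObj.mp (hrep p)) p
  exact this hp

end Pump

/-! ### Existence of an ultimately periodic witness -/

section Witness

variable {C : Type} [Nonempty C]

lemma finClasses_compl {W : Set (ℕ → C)} (h : FinClasses W) : FinClasses Wᶜ := by
  have : (Set.range fun w : List C => contAfter Wᶜ w) ⊆
      compl '' (Set.range fun w : List C => contAfter W w) := by
    rintro S ⟨w, rfl⟩
    exact ⟨contAfter W w, ⟨w, rfl⟩, (contAfter_compl W w).symm⟩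
  exact Set.Finite.subset (Set.Finite.image _ h) this

lemma exists_loop (W : Set (ℕ → C)) (hreg : FinClasses W) (s : ℕ → C) (n₀ : ℕ) :
    ∃ i j : ℕ, n₀ ≤ i ∧ i < j ∧
      contAfter W (List.ofFn fun t : Fin i => s t) =
        contAfter W (List.ofFn fun t : Fin j => s t) := by
  obtain ⟨i, hi, j, hj, hne, heq⟩ :=
    Set.Infinite.exists_ne_map_eq_of_mapsTo (f := fun i : ℕ =>
        contAfter W (List.ofFn fun t : Fin i => s t))
      (Set.Ici_infinite n₀) (fun i _ => Set.mem_range_self _) hreg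
  rcases Nat.lt_or_ge i j with h | h
  · exact ⟨i, j, hi, h, heq⟩
  · exact ⟨j, i, hj, by omega, heq.symm⟩

lemma wcat_prefix_shift (s : ℕ → C) (j : ℕ) :
    wcat (List.ofFn fun t : Fin j => s t) (fun t => s (j + t)) = s := by
  funext n
  rcases Nat.lt_or_ge n j with h | h
  · rw [wcat_lt (by simpa using h)]
    simp
  · rw [wcat_ge (by simpa using h)]
    have hl : (List.ofFn fun t : Fin j => s t).length = j := by simp
    rw [hl]
    congr 1
    omega

lemma core_witness {A : Set (List C)} {v v' : List C} {x₀ : ℕ → C}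
    (hreg : FinClasses (SafeObj A))
    (hs : wcat v x₀ ∈ SafeObj A) (p : ℕ)
    (hr : (List.ofFn fun t : Fin p => wcat v' x₀ t) ∈ A) :
    ∃ u y : List C, y ≠ [] ∧ wcat v (wcat u (wpow y)) ∈ SafeObj A ∧
      wcat v' (wcat u (wpow y)) ∈ ReachObj A := by
  set s : ℕ → C := wcat v x₀ with hsdef
  obtain ⟨i, j, hi, hij, heq⟩ := exists_loop (SafeObj A) hreg s (v.length + p)
  obtain ⟨k, rfl⟩ : ∃ k, j = i + k := ⟨j - i, by omega⟩
  have hk : 0 < k := by omega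
  set qi : List C := List.ofFn fun t : Fin i => s t with hqi
  set y : List C := List.ofFn fun t : Fin k => s (i + t) with hy
  have hysplit : (List.ofFn fun t : Fin (i + k) => s t) = qi ++ y :=
    ofFn_split s i k
  have hyne : y ≠ [] := by
    rw [hy]
    intro hc
    have := congrArg List.length hc
    simp at this
    omega
  have hx2 : wcat (qi ++ y) (fun t => s (i + k + t)) = s := by
    rw [← hysplit]
    exact wcat_prefix_shift s (i + k)
  have hpump : wcat qi (wpow y) ∈ SafeObj A := by
    apply safe_pump hyne (by rw [← hysplit]; exact heq)
    rw [hx2]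
    exact hs
  set u : List C := List.ofFn fun t : Fin (i - v.length) => x₀ t with hu
  have hqiu : qi = v ++ u := by
    apply List.ext_getElem
    · simp [hqi, hu]
      omega
    · intro t h1 h2
      simp only [hqi, List.getElem_ofFn]
      rcases Nat.lt_or_ge t v.length with h | h
      · rw [List.getElem_append_left h]
        rw [hsdef, wcat_lt h]
        rfl
      · rw [List.getElem_append_right h]
        rw [hsdef, wcat_ge h]
        simp [hu]
  refine ⟨u, y, hyne, ?_, ?_⟩
  · rw [← wcat_append, ← hqiu]
    exact hpump
  · have hulen : u.length = i - v.length := by simp [hu]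
    have hup : p ≤ u.length := by rw [hulen]; omega
    have hagree : ∀ t < u.length, wcat u (wpow y) t = x₀ t := by
      intro t ht
      rw [wcat_lt ht]
      simp only [hu, List.get_eq_getElem, List.getElem_ofFn]
    refine ⟨p, ?_⟩
    have heq2 : (List.ofFn fun t : Fin p => wcat v' (wcat u (wpow y)) t) =
        (List.ofFn fun t : Fin p => wcat v' x₀ t) := by
      apply ofFn_congr
      intro t ht
      exact wcat_congr hagree (by omega)
    rw [heq2]
    exact hr

lemma exists_periodic_witness {W : Set (ℕ → C)} {A : Set (List C)}
    (hW : W = ReachObj A ∨ W = SafeObj A) (hreg : FinClasses W) {w₁ w₂ : List C}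
    (x₀ : ℕ → C) (h1 : x₀ ∈ contAfter W (w₁ ++ w₂)) (h2 : x₀ ∉ contAfter W w₁) :
    ∃ u y : List C, y ≠ [] ∧ wcat u (wpow y) ∈ contAfter W (w₁ ++ w₂) ∧
      wcat u (wpow y) ∉ contAfter W w₁ := by
  have hregS : FinClasses (SafeObj A) := by
    rcases hW with rfl | rfl
    · exact finClasses_compl hreg
    · exact hreg
  rcases hW with rfl | rfl
  · -- reachability case
    obtain ⟨p, hp⟩ := h1
    have hsafe : wcat w₁ x₀ ∈ SafeObj A := h2
    obtain ⟨u, y, hyne, hS, hR⟩ := core_witness hregS hsafe p hp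
    exact ⟨u, y, hyne, hR, hS⟩
  · -- safety case
    have hreach : wcat w₁ x₀ ∈ ReachObj A := by
      by_contra hc
      exact h2 hc
    obtain ⟨p, hp⟩ := hreach
    obtain ⟨u, y, hyne, hS, hR⟩ := core_witness hregS h1 p hp
    refine ⟨u, y, hyne, hS, fun hc => ?_⟩
    exact hc hR

end Witness

/-! ### Generic machinery for one-player arenas -/

section OnePlayer

variable {C : Type} {A : Arena C}

lemma endFrom_append (v : A.V) (l : List (A.V × C × A.V)) (e : A.V × C × A.V) :
    A.endFrom v (l ++ [e]) = e.2.2 := by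
  induction l generalizing v with
  | nil => rfl
  | cons e' l ih => exact ih e'.2.2

lemma histFrom_append (v : A.V) (l : List (A.V × C × A.V)) (e : A.V × C × A.V) :
    A.HistFrom v (l ++ [e]) ↔ A.HistFrom v l ∧ e ∈ A.E ∧ e.1 = A.endFrom v l := by
  induction l generalizing v with
  | nil =>
    simp [Arena.HistFrom, Arena.endFrom]
  | cons e' l ih =>
    show (e' ∈ A.E ∧ e'.1 = v ∧ A.HistFrom e'.2.2 (l ++ [e])) ↔
      (e' ∈ A.E ∧ e'.1 = v ∧ A.HistFrom e'.2.2 l) ∧ _ ∧ e.1 = A.endFrom e'.2.2 l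
    rw [ih]
    tauto

/-- The canonical history of a strategy from a vertex. -/
def chist (σ : A.Strategy) (v : A.V) : ℕ → List (A.V × C × A.V)
  | 0 => []
  | n + 1 => chist σ v n ++ [σ.next v (chist σ v n)]

/-- The canonical play of a strategy from a vertex. -/
def cplay (σ : A.Strategy) (v : A.V) (n : ℕ) : A.V × C × A.V :=
  σ.next v (chist σ v n)

lemma chist_eq_ofFn (σ : A.Strategy) (v : A.V) (n : ℕ) :
    chist σ v n = List.ofFn fun i : Fin n => cplay σ v i := by
  induction n with
  | zero => simp [chist]
  | succ n ih =>
    rw [List.ofFn_succ']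
    show chist σ v n ++ [cplay σ v n] = _
    rw [List.concat_eq_append, ih]
    rfl

lemma chist_hist (h1p : A.OneP1) (σ : A.Strategy) (v : A.V) :
    ∀ n, A.HistFrom v (chist σ v n) := by
  intro n
  induction n with
  | zero => trivial
  | succ n ih =>
    have hl := σ.legal v (chist σ v n) ih (h1p _)
    show A.HistFrom v (chist σ v n ++ [σ.next v (chist σ v n)])
    rw [histFrom_append]
    exact ⟨ih, hl.1, hl.2⟩

lemma cplay_mem (h1p : A.OneP1) (σ : A.Strategy) (v : A.V) (n : ℕ) :
    cplay σ v n ∈ A.E :=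
  (σ.legal v _ (chist_hist h1p σ v n) (h1p _)).1

lemma cplay_fst (h1p : A.OneP1) (σ : A.Strategy) (v : A.V) (n : ℕ) :
    (cplay σ v n).1 = A.endFrom v (chist σ v n) :=
  (σ.legal v _ (chist_hist h1p σ v n) (h1p _)).2

lemma endFrom_chist (σ : A.Strategy) (v : A.V) (n : ℕ) :
    A.endFrom v (chist σ v (n + 1)) = (cplay σ v n).2.2 := by
  show A.endFrom v (chist σ v n ++ [σ.next v (chist σ v n)]) = _
  rw [endFrom_append]
  rfl

lemma cplay_playFrom (h1p : A.OneP1) (σ : A.Strategy) (v : A.V) :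
    A.PlayFrom v (cplay σ v) := by
  refine ⟨cplay_fst h1p σ v 0, fun n => ⟨cplay_mem h1p σ v n, ?_⟩⟩
  rw [cplay_fst h1p σ v (n + 1), endFrom_chist]

lemma cplay_consistent (h1p : A.OneP1) (σ : A.Strategy) (v : A.V) :
    σ.Consistent v (cplay σ v) := by
  intro n _
  rw [← chist_eq_ofFn]
  rfl

lemma consistent_eq_cplay (h1p : A.OneP1) (σ : A.Strategy) (v : A.V)
    (π : ℕ → A.V × C × A.V) (hc : σ.Consistent v π) : π = cplay σ v := by
  funext n
  induction n using Nat.strong_induction_on with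
  | _ n ih =>
    have h2 : (List.ofFn fun i : Fin n => π i) = List.ofFn fun i : Fin n => cplay σ v i :=
      ofFn_congr fun i hi => ih i hi
    rw [hc n (h1p _), h2, ← chist_eq_ofFn]
    rfl

lemma winningFrom_iff_cplay (h1p : A.OneP1) (σ : A.Strategy) (W : Set (ℕ → C)) (v : A.V) :
    σ.WinningFrom W v ↔ Arena.playCol (cplay σ v) ∈ W := by
  constructor
  · intro hw
    exact hw _ (cplay_playFrom h1p σ v) (cplay_consistent h1p σ v)
  · intro h π _ hc
    rw [consistent_eq_cplay h1p σ v π hc]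
    exact h

lemma cplay_eq_of (h1p : A.OneP1) (σ : A.Strategy) (v : A.V) (ew : ℕ → A.V × C × A.V)
    (hnext : ∀ k, σ.next v (List.ofFn fun i : Fin k => ew i) = ew k) :
    cplay σ v = ew := by
  funext n
  induction n using Nat.strong_induction_on with
  | _ n ih =>
    have h2 : chist σ v n = List.ofFn fun i : Fin n => ew i := by
      rw [chist_eq_ofFn]
      exact ofFn_congr fun i hi => ih i hi
    show σ.next v (chist σ v n) = ew n
    rw [h2, hnext]

lemma chain_endFrom (v : A.V) (ew : ℕ → A.V × C × A.V) (h0 : (ew 0).1 = v)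
    (hchain : ∀ k, (ew k).2.2 = (ew (k + 1)).1) :
    ∀ k, A.endFrom v (List.ofFn fun i : Fin k => ew i) = (ew k).1 := by
  intro k
  induction k with
  | zero => simpa [Arena.endFrom] using h0.symm
  | succ k _ =>
    rw [List.ofFn_succ', List.concat_eq_append]
    show A.endFrom v ((List.ofFn fun i : Fin k => ew i) ++ [ew k]) = _
    rw [endFrom_append]
    exact hchain k

lemma chain_hist (v : A.V) (ew : ℕ → A.V × C × A.V) (hE : ∀ k, ew k ∈ A.E)
    (h0 : (ew 0).1 = v) (hchain : ∀ k, (ew k).2.2 = (ew (k + 1)).1) :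
    ∀ k, A.HistFrom v (List.ofFn fun i : Fin k => ew i) := by
  intro k
  induction k with
  | zero => show A.HistFrom v ((List.ofFn (fun i : Fin 0 => ew i))); simp; trivial
  | succ k ih =>
    rw [List.ofFn_succ', List.concat_eq_append]
    show A.HistFrom v ((List.ofFn fun i : Fin k => ew i) ++ [ew k])
    rw [histFrom_append]
    exact ⟨ih, hE k, by rw [chain_endFrom v ew h0 hchain k]⟩

end OnePlayer

/-! ### The loop arena -/

section LoopArena

variable {C : Type} [Nonempty C]

/-- Successor function of the loop arena (on indices). -/
def stepF (la lb lz lu i : ℕ) : ℕ :=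
  if i < la then i + 1
  else if i < la + lb then (if i + 1 < la + lb then i + 1 else la)
  else (if i + 1 < la + lb + lz then i + 1 else la + lb + lu)

/-- Index within `z` read at time `t` after exiting. -/
def qf (lz lu : ℕ) : ℕ → ℕ
  | 0 => 0
  | t + 1 => if qf lz lu t + 1 < lz then qf lz lu t + 1 else lu

lemma qf_lt {lz lu : ℕ} (hz : lu < lz) : ∀ t, qf lz lu t < lz := by
  intro t
  induction t with
  | zero => show 0 < lz; omega
  | succ t _ =>
    show (if qf lz lu t + 1 < lz then qf lz lu t + 1 else lu) < lz
    split_ifs <;> omega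

lemma qf_closed {lu ly : ℕ} (hy : 0 < ly) :
    ∀ t, qf (lu + ly) lu t = if t < lu then t else lu + ((t - lu) % ly) := by
  intro t
  induction t with
  | zero =>
    show 0 = _
    split_ifs with h
    · rfl
    · have : lu = 0 := by omega
      simp [this]
  | succ t ih =>
    show (if qf (lu + ly) lu t + 1 < lu + ly then qf (lu + ly) lu t + 1 else lu) = _
    rw [ih]
    rcases Nat.lt_or_ge t lu with h | h
    · rw [if_pos h]
      rcases Nat.lt_or_ge (t + 1) lu with h2 | h2
      · rw [if_pos (by omega), if_pos h2]
      · have ht : t + 1 = lu := by omega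
        rw [if_pos (by omega), if_neg (by omega), ht]
        simp
    · rw [if_neg (show ¬ t < lu by omega), if_neg (show ¬ t + 1 < lu by omega)]
      have hmod : (t + 1 - lu) % ly = ((t - lu) % ly + 1) % ly := by
        rw [Nat.mod_add_mod]
        congr 1
        omega
      have hlt : (t - lu) % ly < ly := Nat.mod_lt _ hy
      rcases Nat.lt_or_ge ((t - lu) % ly + 1) ly with h2 | h2
      · rw [if_pos (show lu + (t - lu) % ly + 1 < lu + ly by omega), hmod,
          Nat.mod_eq_of_lt h2]
        omega
      · have he : (t - lu) % ly + 1 = ly := by omega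
        rw [if_neg (show ¬ lu + (t - lu) % ly + 1 < lu + ly by omega), hmod, he,
          Nat.mod_self]
        omega

lemma stepF_lt {la lb lz lu : ℕ} (hb : 0 < lb) (hz : lu < lz) (i : ℕ) :
    stepF la lb lz lu i < la + lb + lz := by
  unfold stepF
  split_ifs <;> omega

lemma stepF_exit (la lb lz lu t : ℕ) :
    stepF la lb lz lu (la + lb + qf lz lu t) = la + lb + qf lz lu (t + 1) := by
  show _ = la + lb + (if qf lz lu t + 1 < lz then qf lz lu t + 1 else lu)
  unfold stepF
  split_ifs <;> omega

/-- Position in the looping play at time `k`. -/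
def posLF (la lb k : ℕ) : ℕ := if k < la then k else la + ((k - la) % lb)

lemma posLF_lt {la lb lz : ℕ} (hb : 0 < lb) (hz : 0 < lz) (k : ℕ) :
    posLF la lb k < la + lb + lz := by
  unfold posLF
  split_ifs with h
  · omega
  · have := Nat.mod_lt (k - la) hb
    omega

lemma stepF_posLF {la lb : ℕ} (lz lu : ℕ) (hb : 0 < lb) (k : ℕ) :
    stepF la lb lz lu (posLF la lb k) = posLF la lb (k + 1) := by
  unfold posLF stepF
  rcases Nat.lt_or_ge k la with h1 | h1
  · rw [if_pos h1, if_pos h1]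
    rcases Nat.lt_or_ge (k + 1) la with h | h
    · rw [if_pos h]
    · rw [if_neg (show ¬ k + 1 < la by omega)]
      have h0 : k + 1 - la = 0 := by omega
      rw [h0]
      simp
      omega
  · rw [if_neg (show ¬ k < la by omega), if_neg (show ¬ k + 1 < la by omega),
      if_neg (show ¬ la + (k - la) % lb < la by omega)]
    have hr : (k - la) % lb < lb := Nat.mod_lt _ hb
    rw [if_pos (show la + (k - la) % lb < la + lb by omega)]
    have hmod : (k + 1 - la) % lb = ((k - la) % lb + 1) % lb := by
      rw [Nat.mod_add_mod]
      congr 1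
      omega
    rcases Nat.lt_or_ge ((k - la) % lb + 1) lb with h2 | h2
    · rw [if_pos (show la + (k - la) % lb + 1 < la + lb by omega), hmod,
        Nat.mod_eq_of_lt h2]
      omega
    · have he : (k - la) % lb + 1 = lb := by omega
      rw [if_neg (show ¬ la + (k - la) % lb + 1 < la + lb by omega), hmod, he,
        Nat.mod_self]
      omega

variable (a b z : List C) (lu : ℕ)

/-- Colors of the vertices. -/
noncomputable def colF (i : ℕ) : C := (a ++ b ++ z).getD i (Classical.arbitrary C)

variable (hb : 0 < b.length) (hz : lu < z.length)

/-- The canonical (deterministic) edge out of a vertex. -/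
noncomputable def canonE (v : Fin (a.length + b.length + z.length)) :
    Fin (a.length + b.length + z.length) × C × Fin (a.length + b.length + z.length) :=
  (v, colF a b z v.val,
    ⟨stepF a.length b.length z.length lu v.val, stepF_lt hb hz _⟩)

/-- The distinguished cycle vertex. -/
def c0F : Fin (a.length + b.length + z.length) := ⟨a.length, by omega⟩

/-- The extra exit edge out of `c0F`. -/
noncomputable def exitE : Fin (a.length + b.length + z.length) × C × Fin (a.length + b.length + z.length) :=
  (c0F a b z lu hb, z.getD 0 (Classical.arbitrary C),
    ⟨stepF a.length b.length z.length lu (a.length + b.length), stepF_lt hb hz _⟩)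

/-- The loop arena. -/
@[reducible]
noncomputable def mkArena : Arena C where
  V := Fin (a.length + b.length + z.length)
  P1 := fun _ => True
  E := Set.range (canonE a b z lu hb hz) ∪ {exitE a b z lu hb hz}
  succ := fun v _ => ⟨canonE a b z lu hb hz v, Or.inl ⟨v, rfl⟩, rfl⟩

lemma mem_E_iff {e : Fin (a.length + b.length + z.length) × C ×
    Fin (a.length + b.length + z.length)}
    (he : e ∈ (mkArena a b z lu hb hz).E) :
    e = canonE a b z lu hb hz e.1 ∨ e = exitE a b z lu hb hz := by
  rcases he with ⟨w, rfl⟩ | he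
  · left; rfl
  · right; exact he

lemma eq_canonE {e : Fin (a.length + b.length + z.length) × C ×
    Fin (a.length + b.length + z.length)}
    (he : e ∈ (mkArena a b z lu hb hz).E) (hne : e.1.val ≠ a.length) :
    e = canonE a b z lu hb hz e.1 := by
  rcases mem_E_iff a b z lu hb hz he with h | h
  · exact h
  · exfalso
    apply hne
    rw [h]
    rfl

lemma colF_a {i : ℕ} (h : i < a.length) :
    colF a b z i = a.getD i (Classical.arbitrary C) := by
  unfold colF
  rw [List.getD_append _ _ _ i (by simp; omega), List.getD_append _ _ _ i h]

lemma colF_b {j : ℕ} (h : j < b.length) :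
    colF a b z (a.length + j) = b.getD j (Classical.arbitrary C) := by
  unfold colF
  rw [List.getD_append _ _ _ _ (by simp; omega),
    List.getD_append_right _ _ _ _ (by omega)]
  congr 1
  omega

lemma colF_z {j : ℕ} (h : j < z.length) :
    colF a b z (a.length + b.length + j) = z.getD j (Classical.arbitrary C) := by
  unfold colF
  rw [List.getD_append_right _ _ _ _ (by simp)]
  congr 1
  simp

end LoopArena

/-! ### Plays in the loop arena -/

section Plays

variable {C : Type} [Nonempty C]

/-- Start vertex of the loop arena. -/
def startV (a b z : List C) (hb : 0 < b.length) :
    Fin (a.length + b.length + z.length) := ⟨0, by omega⟩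

/-- Position at time `k` in the "loop once then exit" play. -/
def pwF (la lb lz lu k : ℕ) : ℕ :=
  if k < la + lb then k else la + lb + qf lz lu (k - (la + lb))

lemma pwF_lt {la lb lz lu : ℕ} (hb : 0 < lb) (hz : lu < lz) (k : ℕ) :
    pwF la lb lz lu k < la + lb + lz := by
  unfold pwF
  split_ifs with h
  · omega
  · have := qf_lt hz (k - (la + lb))
    omega

lemma stepF_pwF {la lb lz lu : ℕ} (k : ℕ) (hk : k ≠ la + lb) (hk1 : k + 1 ≠ la + lb) :
    stepF la lb lz lu (pwF la lb lz lu k) = pwF la lb lz lu (k + 1) := by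
  unfold pwF
  rcases Nat.lt_or_ge k (la + lb) with h | h
  · rw [if_pos h, if_pos (by omega)]
    unfold stepF
    split_ifs <;> omega
  · rw [if_neg (by omega), if_neg (by omega),
      show k + 1 - (la + lb) = (k - (la + lb)) + 1 by omega]
    exact stepF_exit la lb lz lu (k - (la + lb))

/-- Position at time `k` in the "exit immediately" play. -/
def pxF (la lb lz lu k : ℕ) : ℕ :=
  if k < la then k else la + lb + qf lz lu (k - la)

lemma pxF_lt {la lb lz lu : ℕ} (hb : 0 < lb) (hz : lu < lz) (k : ℕ) :
    pxF la lb lz lu k < la + lb + lz := by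
  unfold pxF
  split_ifs with h
  · omega
  · have := qf_lt hz (k - la)
    omega

/-- The "loop once then exit" play. -/
noncomputable def ewW (a b z : List C) (lu : ℕ) (hb : 0 < b.length) (hz : lu < z.length)
    (k : ℕ) :
    Fin (a.length + b.length + z.length) × C × Fin (a.length + b.length + z.length) :=
  if k = a.length + b.length then exitE a b z lu hb hz
  else canonE a b z lu hb hz ⟨pwF a.length b.length z.length lu k, pwF_lt hb hz k⟩

/-- The "exit immediately" play. -/
noncomputable def ewX (a b z : List C) (lu : ℕ) (hb : 0 < b.length) (hz : lu < z.length)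
    (k : ℕ) :
    Fin (a.length + b.length + z.length) × C × Fin (a.length + b.length + z.length) :=
  if k = a.length then exitE a b z lu hb hz
  else canonE a b z lu hb hz ⟨pxF a.length b.length z.length lu k, pxF_lt hb hz k⟩

/-- The "loop forever" play. -/
noncomputable def ewL (a b z : List C) (lu : ℕ) (hb : 0 < b.length) (hz : lu < z.length)
    (k : ℕ) :
    Fin (a.length + b.length + z.length) × C × Fin (a.length + b.length + z.length) :=
  canonE a b z lu hb hz ⟨posLF a.length b.length k, posLF_lt hb (by omega) k⟩

variable (a b z : List C) (lu : ℕ) (hb : 0 < b.length) (hz : lu < z.length)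

lemma ewW_mem (k : ℕ) : ewW a b z lu hb hz k ∈ (mkArena a b z lu hb hz).E := by
  unfold ewW
  split_ifs
  · exact Or.inr rfl
  · exact Or.inl ⟨_, rfl⟩

lemma ewX_mem (k : ℕ) : ewX a b z lu hb hz k ∈ (mkArena a b z lu hb hz).E := by
  unfold ewX
  split_ifs
  · exact Or.inr rfl
  · exact Or.inl ⟨_, rfl⟩

lemma ewL_mem (k : ℕ) : ewL a b z lu hb hz k ∈ (mkArena a b z lu hb hz).E :=
  Or.inl ⟨_, rfl⟩

lemma ewW_h0 : (ewW a b z lu hb hz 0).1 = startV a b z hb := by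
  unfold ewW
  rw [if_neg (by omega)]
  apply Fin.ext
  show pwF a.length b.length z.length lu 0 = 0
  unfold pwF
  rw [if_pos (by omega)]

lemma ewX_h0 : (ewX a b z lu hb hz 0).1 = startV a b z hb := by
  unfold ewX
  split_ifs with h
  · apply Fin.ext
    show a.length = 0
    omega
  · apply Fin.ext
    show pxF a.length b.length z.length lu 0 = 0
    unfold pxF
    rw [if_pos (by omega)]

lemma ewL_h0 : (ewL a b z lu hb hz 0).1 = startV a b z hb := by
  apply Fin.ext
  show posLF a.length b.length 0 = 0
  unfold posLF
  split_ifs with h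
  · rfl
  · have hla : a.length = 0 := by omega
    simp [hla]

lemma ewW_chain (k : ℕ) :
    (ewW a b z lu hb hz k).2.2 = (ewW a b z lu hb hz (k + 1)).1 := by
  apply Fin.ext
  unfold ewW
  by_cases hk : k = a.length + b.length
  · rw [if_pos hk, if_neg (by omega)]
    show stepF a.length b.length z.length lu (a.length + b.length) =
      pwF a.length b.length z.length lu (k + 1)
    unfold pwF
    rw [if_neg (by omega), show k + 1 - (a.length + b.length) = 1 by omega]
    exact stepF_exit a.length b.length z.length lu 0
  · rw [if_neg hk]
    by_cases hk1 : k + 1 = a.length + b.length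
    · rw [if_pos hk1]
      show stepF a.length b.length z.length lu (pwF a.length b.length z.length lu k) =
        a.length
      unfold pwF
      rw [if_pos (by omega)]
      unfold stepF
      split_ifs <;> omega
    · rw [if_neg hk1]
      exact stepF_pwF k hk hk1

lemma ewX_chain (k : ℕ) :
    (ewX a b z lu hb hz k).2.2 = (ewX a b z lu hb hz (k + 1)).1 := by
  apply Fin.ext
  unfold ewX
  by_cases hk : k = a.length
  · rw [if_pos hk, if_neg (by omega)]
    show stepF a.length b.length z.length lu (a.length + b.length) =
      pxF a.length b.length z.length lu (k + 1)
    unfold pxF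
    rw [if_neg (by omega), show k + 1 - a.length = 1 by omega]
    exact stepF_exit a.length b.length z.length lu 0
  · rw [if_neg hk]
    by_cases hk1 : k + 1 = a.length
    · rw [if_pos hk1]
      show stepF a.length b.length z.length lu (pxF a.length b.length z.length lu k) =
        a.length
      unfold pxF
      rw [if_pos (by omega)]
      unfold stepF
      split_ifs <;> omega
    · rw [if_neg hk1]
      show stepF a.length b.length z.length lu (pxF a.length b.length z.length lu k) =
        pxF a.length b.length z.length lu (k + 1)
      unfold pxF
      rcases Nat.lt_or_ge k a.length with h | h
      · rw [if_pos h, if_pos (by omega)]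
        unfold stepF
        split_ifs <;> omega
      · rw [if_neg (by omega), if_neg (by omega),
          show k + 1 - a.length = (k - a.length) + 1 by omega]
        exact stepF_exit a.length b.length z.length lu (k - a.length)

lemma ewL_chain (k : ℕ) :
    (ewL a b z lu hb hz k).2.2 = (ewL a b z lu hb hz (k + 1)).1 := by
  apply Fin.ext
  exact stepF_posLF z.length lu hb k

end Plays

/-! ### Colors of the plays -/

section Colors

variable {C : Type} [Nonempty C]

/-- The stream of colors read after exiting. -/
noncomputable def exColF (z : List C) (lu t : ℕ) : C :=
  z.getD (qf z.length lu t) (Classical.arbitrary C)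

lemma exColF_eq (u y : List C) (hy : y ≠ []) :
    exColF (u ++ y) u.length = wcat u (wpow y) := by
  funext t
  unfold exColF
  have hly : 0 < y.length := List.length_pos_iff.mpr hy
  rw [show (u ++ y).length = u.length + y.length from List.length_append,
    qf_closed hly t]
  rcases Nat.lt_or_ge t u.length with h | h
  · rw [if_pos h, List.getD_append _ _ _ _ h, ← wcat_getD h]
  · rw [if_neg (by omega), List.getD_append_right _ _ _ _ (by omega), wcat_ge h]
    rw [show u.length + (t - u.length) % y.length - u.length = (t - u.length) % y.length
      by omega]
    exact (wpow_getD hy _ _).symm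

variable (a b z : List C) (lu : ℕ) (hb : 0 < b.length) (hz : lu < z.length)

lemma colF_ab {i : ℕ} (h : i < a.length + b.length) :
    colF a b z i = (a ++ b).getD i (Classical.arbitrary C) := by
  unfold colF
  rw [List.getD_append _ _ _ _ (by simp; omega)]

lemma playCol_ewW :
    Arena.playCol (fun k => ewW a b z lu hb hz k) = wcat (a ++ b) (exColF z lu) := by
  funext k
  show (ewW a b z lu hb hz k).2.1 = _
  by_cases hk : k = a.length + b.length
  · unfold ewW
    rw [if_pos hk]
    show z.getD 0 (Classical.arbitrary C) = _
    rw [wcat_ge (by simp; omega), show k - (a ++ b).length = 0 by simp; omega]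
    rfl
  · unfold ewW
    rw [if_neg hk]
    show colF a b z (pwF a.length b.length z.length lu k) = _
    unfold pwF
    rcases Nat.lt_or_ge k (a.length + b.length) with h | h
    · rw [if_pos h, colF_ab a b z h, wcat_getD (by simp; omega)]
    · rw [if_neg (by omega), colF_z a b z (qf_lt hz _),
        wcat_ge (by simp; omega)]
      show _ = exColF z lu (k - (a ++ b).length)
      unfold exColF
      rw [show k - (a ++ b).length = k - (a.length + b.length) by simp]

lemma playCol_ewX :
    Arena.playCol (fun k => ewX a b z lu hb hz k) = wcat a (exColF z lu) := by
  funext k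
  show (ewX a b z lu hb hz k).2.1 = _
  by_cases hk : k = a.length
  · unfold ewX
    rw [if_pos hk]
    show z.getD 0 (Classical.arbitrary C) = _
    rw [wcat_ge (by omega), show k - a.length = 0 by omega]
    rfl
  · unfold ewX
    rw [if_neg hk]
    show colF a b z (pxF a.length b.length z.length lu k) = _
    unfold pxF
    rcases Nat.lt_or_ge k a.length with h | h
    · rw [if_pos h, colF_a a b z h, wcat_getD h]
    · rw [if_neg (by omega), colF_z a b z (qf_lt hz _), wcat_ge h]
      rfl

lemma playCol_ewL :
    Arena.playCol (fun k => ewL a b z lu hb hz k) = wcat a (wpow b) := by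
  funext k
  show colF a b z (posLF a.length b.length k) = _
  unfold posLF
  rcases Nat.lt_or_ge k a.length with h | h
  · rw [if_pos h, colF_a a b z h, wcat_getD h]
  · have hbne : b ≠ [] := by
      intro hc
      rw [hc] at hb
      simp at hb
    rw [if_neg (by omega), colF_b a b z (Nat.mod_lt _ hb), wcat_ge h]
    exact (wpow_getD hbne _ _).symm

lemma list_ofFn_wcat (w : List C) (x : ℕ → C) :
    (List.ofFn fun i : Fin w.length => wcat w x i) = w := by
  apply List.ext_getElem (by simp)
  intro t h1 h2
  simp only [List.getElem_ofFn]
  rw [wcat_lt h2]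
  rfl

end Colors

/-! ### Memory computations -/

section Memory

variable {C : Type} [Nonempty C]

lemma updStar_append (N : MemStruct C) (q : N.M) (l1 l2 : List C) :
    N.updStar q (l1 ++ l2) = N.updStar (N.updStar q l1) l2 :=
  List.foldl_append

lemma updStar_loop (N : MemStruct C) (a b : List C) (hbne : b ≠ [])
    (hmb : N.updStar (N.updStar N.init a) b = N.updStar N.init a) (j : ℕ) :
    N.updStar N.init
        (List.ofFn fun i : Fin (a.length + j * b.length) => wcat a (wpow b) i) =
      N.updStar N.init a := by
  induction j with
  | zero =>
    rw [show a.length + 0 * b.length = a.length by ring, list_ofFn_wcat]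
  | succ j ih =>
    rw [show a.length + (j + 1) * b.length = (a.length + j * b.length) + b.length by ring,
      ofFn_split (wcat a (wpow b)) (a.length + j * b.length) b.length,
      updStar_append, ih]
    have hseg : (List.ofFn fun t : Fin b.length =>
        wcat a (wpow b) (a.length + j * b.length + t)) = b := by
      apply List.ext_getElem (by simp)
      intro t h1 h2
      simp only [List.getElem_ofFn]
      rw [wcat_ge (by omega),
        show a.length + j * b.length + t - a.length = b.length * j + t by ring_nf; omega,
        wpow_getD hbne _ (Classical.arbitrary C), Nat.mul_add_mod, Nat.mod_eq_of_lt h2,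
        List.getD_eq_getElem _ _ h2]
    rw [hseg, hmb]

end Memory

/-! ### The two strategies and their canonical plays -/

section Strategies

variable {C : Type} [Nonempty C]

open Classical in
/-- The winning strategy: loop once, then exit. -/
noncomputable def sigW (a b z : List C) (lu : ℕ) (hb : 0 < b.length)
    (hz : lu < z.length) : (mkArena a b z lu hb hz).Strategy where
  next := fun v l =>
    if ((mkArena a b z lu hb hz).endFrom v l = c0F a b z lu hb ∧
        a.length + b.length ≤ l.length) then exitE a b z lu hb hz
    else canonE a b z lu hb hz ((mkArena a b z lu hb hz).endFrom v l)
  legal := by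
    intro v l _ _
    dsimp only
    split_ifs with h
    · refine ⟨Or.inr rfl, ?_⟩
      rw [h.1]
      rfl
    · exact ⟨Or.inl ⟨_, rfl⟩, rfl⟩

variable (a b z : List C) (lu : ℕ) (hb : 0 < b.length) (hz : lu < z.length)

lemma sigW_next (k : ℕ) :
    (sigW a b z lu hb hz).next (startV a b z hb)
      (List.ofFn fun i : Fin k => ewW a b z lu hb hz i) = ewW a b z lu hb hz k := by
  have hend : (mkArena a b z lu hb hz).endFrom (startV a b z hb)
      (List.ofFn fun i : Fin k => ewW a b z lu hb hz i) = (ewW a b z lu hb hz k).1 :=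
    chain_endFrom _ _ (ewW_h0 a b z lu hb hz) (ewW_chain a b z lu hb hz) k
  simp only [sigW]
  rw [hend, List.length_ofFn]
  by_cases hk : k = a.length + b.length
  · have h1 : ewW a b z lu hb hz k = exitE a b z lu hb hz := by
      unfold ewW
      rw [if_pos hk]
    rw [h1, if_pos ⟨rfl, by omega⟩]
  · have h1 : ewW a b z lu hb hz k =
        canonE a b z lu hb hz ⟨pwF a.length b.length z.length lu k, pwF_lt hb hz k⟩ := by
      unfold ewW
      rw [if_neg hk]
    rw [h1, if_neg]
    · rfl
    · rintro ⟨hc1, hc2⟩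
      have hval : pwF a.length b.length z.length lu k = a.length := congrArg Fin.val hc1
      unfold pwF at hval
      split_ifs at hval <;> omega

lemma sigW_winning (W : Set (ℕ → C))
    (hwin : wcat (a ++ b) (exColF z lu) ∈ W) :
    (sigW a b z lu hb hz).WinningFrom W (startV a b z hb) := by
  have h1p : (mkArena a b z lu hb hz).OneP1 := fun _ => trivial
  rw [winningFrom_iff_cplay h1p]
  rw [cplay_eq_of h1p _ _ (fun k => ewW a b z lu hb hz k) (sigW_next a b z lu hb hz)]
  rw [playCol_ewW]
  exact hwin

end Strategies

/-! ### Analysis of strategies based on a memory structure -/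

section Based

variable {C : Type} [Nonempty C]
variable (a b z : List C) (lu : ℕ) (hb : 0 < b.length) (hz : lu < z.length)
variable (N : MemStruct C) (σ : (mkArena a b z lu hb hz).Strategy)
variable (nxt : (mkArena a b z lu hb hz).V → N.M →
    (mkArena a b z lu hb hz).V × C × (mkArena a b z lu hb hz).V)

lemma based_next_ewX
    (hnxt : ∀ (v : (mkArena a b z lu hb hz).V) (l : List ((mkArena a b z lu hb hz).V × C ×
        (mkArena a b z lu hb hz).V)),
      (mkArena a b z lu hb hz).HistFrom v l →
      (mkArena a b z lu hb hz).P1 ((mkArena a b z lu hb hz).endFrom v l) →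
      σ.next v l = nxt ((mkArena a b z lu hb hz).endFrom v l)
        (N.updStar N.init (l.map fun e => e.2.1)))
    (hex : nxt (c0F a b z lu hb) (N.updStar N.init a) = exitE a b z lu hb hz)
    (k : ℕ) :
    σ.next (startV a b z hb) (List.ofFn fun i : Fin k => ewX a b z lu hb hz i) =
      ewX a b z lu hb hz k := by
  have hend := chain_endFrom (A := mkArena a b z lu hb hz) (startV a b z hb) (ewX a b z lu hb hz)
    (ewX_h0 a b z lu hb hz) (ewX_chain a b z lu hb hz) k
  have hhist := chain_hist (A := mkArena a b z lu hb hz) (startV a b z hb) (ewX a b z lu hb hz)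
    (ewX_mem a b z lu hb hz) (ewX_h0 a b z lu hb hz) (ewX_chain a b z lu hb hz) k
  by_cases hk : k = a.length
  · rw [hnxt _ _ hhist trivial, hend]
    have h1 : (ewX a b z lu hb hz k).1 = c0F a b z lu hb := by
      unfold ewX
      rw [if_pos hk]
      rfl
    rw [h1]
    have hcols : ((List.ofFn fun i : Fin k => ewX a b z lu hb hz i).map
        fun e : (mkArena a b z lu hb hz).V × C × (mkArena a b z lu hb hz).V => e.2.1)
        = a := by
      subst hk
      rw [List.map_ofFn,
        show ((fun e : (mkArena a b z lu hb hz).V × C × (mkArena a b z lu hb hz).V =>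
              e.2.1) ∘ fun i : Fin a.length =>
            ewX a b z lu hb hz ↑i) = fun i : Fin a.length => wcat a (exColF z lu) ↑i
          from funext fun i => congrFun (playCol_ewX a b z lu hb hz) ↑i]
      exact list_ofFn_wcat a _
    rw [hcols, hex]
    unfold ewX
    rw [if_pos hk]
  · have hleg := σ.legal (startV a b z hb) _ hhist trivial
    have h2 : ewX a b z lu hb hz k = canonE a b z lu hb hz
        ⟨pxF a.length b.length z.length lu k, pxF_lt hb hz k⟩ := by
      unfold ewX
      rw [if_neg hk]
    have hval : ((ewX a b z lu hb hz k).1 : Fin _).val ≠ a.length := by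
      rw [h2]
      show pxF a.length b.length z.length lu k ≠ a.length
      unfold pxF
      split_ifs <;> omega
    have h3 := eq_canonE a b z lu hb hz hleg.1 (by rw [hleg.2, hend]; exact hval)
    rw [h3, hleg.2, hend, h2]
    rfl

lemma based_next_ewL
    (hnxt : ∀ (v : (mkArena a b z lu hb hz).V) (l : List ((mkArena a b z lu hb hz).V × C ×
        (mkArena a b z lu hb hz).V)),
      (mkArena a b z lu hb hz).HistFrom v l →
      (mkArena a b z lu hb hz).P1 ((mkArena a b z lu hb hz).endFrom v l) →
      σ.next v l = nxt ((mkArena a b z lu hb hz).endFrom v l)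
        (N.updStar N.init (l.map fun e => e.2.1)))
    (hloop : nxt (c0F a b z lu hb) (N.updStar N.init a) =
      canonE a b z lu hb hz (c0F a b z lu hb))
    (hmb : N.updStar (N.updStar N.init a) b = N.updStar N.init a)
    (k : ℕ) :
    σ.next (startV a b z hb) (List.ofFn fun i : Fin k => ewL a b z lu hb hz i) =
      ewL a b z lu hb hz k := by
  have hbne : b ≠ [] := by
    intro hc
    rw [hc] at hb
    simp at hb
  have hend := chain_endFrom (A := mkArena a b z lu hb hz) (startV a b z hb) (ewL a b z lu hb hz)
    (ewL_h0 a b z lu hb hz) (ewL_chain a b z lu hb hz) k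
  have hhist := chain_hist (A := mkArena a b z lu hb hz) (startV a b z hb) (ewL a b z lu hb hz)
    (ewL_mem a b z lu hb hz) (ewL_h0 a b z lu hb hz) (ewL_chain a b z lu hb hz) k
  by_cases hk : posLF a.length b.length k = a.length
  · have hk2 : a.length ≤ k ∧ (k - a.length) % b.length = 0 := by
      unfold posLF at hk
      split_ifs at hk <;> omega
    obtain ⟨j, hkj⟩ : ∃ j, k = a.length + j * b.length := by
      refine ⟨(k - a.length) / b.length, ?_⟩
      have := Nat.div_mul_cancel (Nat.dvd_of_mod_eq_zero hk2.2)
      omega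
    rw [hnxt _ _ hhist trivial, hend]
    have h1 : (ewL a b z lu hb hz k).1 = c0F a b z lu hb := Fin.ext hk
    rw [h1]
    have hcols : ((List.ofFn fun i : Fin k => ewL a b z lu hb hz i).map
        fun e : (mkArena a b z lu hb hz).V × C × (mkArena a b z lu hb hz).V => e.2.1)
        = List.ofFn fun i : Fin k => wcat a (wpow b) i := by
      rw [List.map_ofFn,
        show ((fun e : (mkArena a b z lu hb hz).V × C × (mkArena a b z lu hb hz).V =>
              e.2.1) ∘ fun i : Fin k =>
            ewL a b z lu hb hz ↑i) = fun i : Fin k => wcat a (wpow b) ↑i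
          from funext fun i => congrFun (playCol_ewL a b z lu hb hz) ↑i]
    rw [hcols]
    have hmem2 : N.updStar N.init (List.ofFn fun i : Fin k => wcat a (wpow b) i) =
        N.updStar N.init a := by
      rw [hkj]
      exact updStar_loop N a b hbne hmb j
    rw [hmem2, hloop, ← h1]
    rfl
  · have hleg := σ.legal (startV a b z hb) _ hhist trivial
    have hval : ((ewL a b z lu hb hz k).1 : Fin _).val ≠ a.length := hk
    have h3 := eq_canonE a b z lu hb hz hleg.1 (by rw [hleg.2, hend]; exact hval)
    rw [h3, hleg.2, hend]
    rfl

end Based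

/-! ### The main pumping argument -/

lemma pump_main {C : Type} [Nonempty C] (W : Set (ℕ → C)) (N : MemStruct C)
    (hsuff : SufficesIn N W (fun A => A.IsFinite ∧ A.OneP1))
    (a b u y : List C) (hbne : b ≠ []) (hy : y ≠ [])
    (hmb : N.updStar (N.updStar N.init a) b = N.updStar N.init a)
    (hwin : wcat (a ++ b) (wcat u (wpow y)) ∈ W)
    (hlose : wcat a (wcat u (wpow y)) ∉ W) :
    wcat a (wpow b) ∈ W := by
  have hb : 0 < b.length := List.length_pos_iff.mpr hbne
  have hz : u.length < (u ++ y).length := by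
    have : 0 < y.length := List.length_pos_iff.mpr hy
    simp
    omega
  set z : List C := u ++ y with hzdef
  set A : Arena C := mkArena a b z u.length hb hz with hA
  have h1p : A.OneP1 := fun _ => trivial
  have hfin : A.IsFinite :=
    ⟨inferInstanceAs (Finite (Fin _)), (Set.finite_range _).union (Set.finite_singleton _)⟩
  obtain ⟨σ, hbased, hopt⟩ := hsuff A ⟨hfin, h1p⟩
  obtain ⟨nxt, hnxt⟩ := hbased
  have hexW : exColF z u.length = wcat u (wpow y) := exColF_eq u y hy
  have hwstrat : ∃ σ' : A.Strategy, σ'.WinningFrom W (startV a b z hb) := by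
    refine ⟨sigW a b z u.length hb hz, ?_⟩
    apply sigW_winning
    rw [hexW]
    exact hwin
  have hw := hopt _ hwstrat
  rw [winningFrom_iff_cplay h1p] at hw
  -- the edge chosen at the cycle vertex with memory `updStar init a`
  set estar := nxt (c0F a b z u.length hb) (N.updStar N.init a) with hestar
  by_cases hex : estar = exitE a b z u.length hb hz
  · exfalso
    apply hlose
    rw [cplay_eq_of h1p σ _ (fun k => ewX a b z u.length hb hz k)
      (based_next_ewX a b z u.length hb hz N σ nxt hnxt hex)] at hw
    rw [playCol_ewX, hexW] at hw
    exact hw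
  · -- the chosen edge is legal, hence it is the canonical loop edge
    have hhist := chain_hist (A := mkArena a b z u.length hb hz) (startV a b z hb) (ewL a b z u.length hb hz)
      (ewL_mem a b z u.length hb hz) (ewL_h0 a b z u.length hb hz)
      (ewL_chain a b z u.length hb hz) a.length
    have hend := chain_endFrom (A := mkArena a b z u.length hb hz) (startV a b z hb) (ewL a b z u.length hb hz)
      (ewL_h0 a b z u.length hb hz) (ewL_chain a b z u.length hb hz) a.length
    have hc0 : (ewL a b z u.length hb hz a.length).1 = c0F a b z u.length hb := by
      apply Fin.ext
      show posLF a.length b.length a.length = a.length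
      unfold posLF
      rw [if_neg (by omega)]
      simp
    have hcols : ((List.ofFn fun i : Fin a.length => ewL a b z u.length hb hz i).map
        fun e : (mkArena a b z u.length hb hz).V × C × (mkArena a b z u.length hb hz).V =>
          e.2.1) = a := by
      rw [List.map_ofFn,
        show ((fun e : (mkArena a b z u.length hb hz).V × C ×
              (mkArena a b z u.length hb hz).V => e.2.1) ∘ fun i : Fin a.length =>
            ewL a b z u.length hb hz ↑i) = fun i : Fin a.length => wcat a (wpow b) ↑i
          from funext fun i => congrFun (playCol_ewL a b z u.length hb hz) ↑i]
      exact list_ofFn_wcat a _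
    have hsn := hnxt (startV a b z hb) _ hhist trivial
    rw [hend, hc0, hcols] at hsn
    have hleg := σ.legal (startV a b z hb) _ hhist trivial
    have hmem : estar ∈ A.E := by
      rw [hestar, ← hsn]
      exact hleg.1
    have hfst : estar.1 = c0F a b z u.length hb := by
      rw [hestar, ← hsn, hleg.2, hend, hc0]
    have hloop : estar = canonE a b z u.length hb hz (c0F a b z u.length hb) := by
      rcases mem_E_iff a b z u.length hb hz hmem with h | h
      · rw [h, hfst]
      · exact absurd h hex
    rw [cplay_eq_of h1p σ _ (fun k => ewL a b z u.length hb hz k)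
      (based_next_ewL a b z u.length hb hz N σ nxt hnxt (by rw [← hestar]; exact hloop)
        hmb)] at hw
    rw [playCol_ewL] at hw
    exact hw

/-- for a regular reachability or safety objective `W`, if the memory
structure `N` suffices to play optimally for `W` in all finite one-player arenas of
Player 1, then `W` is `N`-progress-consistent. -/
theorem progressConsistency_necessary_regular {C : Type} [Nonempty C]
    (W : Set (ℕ → C))
    (hform : ∃ A : Set (List C), W = ReachObj A ∨ W = SafeObj A)
    (hreg : FinClasses W)
    (N : MemStruct C)
    (hsuff : SufficesIn N W (fun A => A.IsFinite ∧ A.OneP1)) :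
    ProgressConsistent N W := by
  intro m w₁ w₂ hm1 hm2 hlt
  by_cases hw2 : w₂ = []
  · exfalso
    subst hw2
    rw [List.append_nil] at hlt
    exact hlt.2 hlt.1
  · obtain ⟨A, hW⟩ := hform
    obtain ⟨x₀, hx1, hx2⟩ := Set.not_subset.mp hlt.2
    obtain ⟨u, y, hy, hin, hout⟩ := exists_periodic_witness hW hreg x₀ hx1 hx2
    have hmb : N.updStar (N.updStar N.init w₁) w₂ = N.updStar N.init w₁ := by
      rw [hm1]
      exact hm2
    exact pump_main W N hsuff w₁ w₂ u y hw2 hy hmb hin hout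

end RegularMemory
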